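/- There exists an instance of the Location-Restricted Stable Matching problem (with 4 students, 2 locations of 2 students each, and 2 projects of capacity 2) that admits a feasible matching but admits no feasible matching with zero blocking pairs. -/

import Mathlib

open Finset
open scoped Classical

/-- A feasible matching of an LRSM instance: every project `p` receives exactly
`cap p` students and students at the same project are collocated. -/
def Feasible {S P L : Type*} [Fintype S] (loc : S → L) (cap : P → ℕ) (M : S → P) : Prop :=
  (∀ p, (Finset.univ.filter fun s => M s = p).card = cap p) ∧
  ∀ s t, M s = M t → loc s = loc t

/-- A blocking pair: student `s` prefers project `p` to its match and `p` prefers `s`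
to one of its matched students (lower rank = more preferred). -/
def BlockingPair {S P : Type*} (sRank : S → P → ℕ) (pRank : P → S → ℕ)
    (M : S → P) (s : S) (p : P) : Prop :=
  sRank s p < sRank s (M s) ∧ ∃ t, M t = p ∧ pRank p s < pRank p t

/-- There is an LRSM instance with 4 students, 2 locations of 2 students each, and
2 projects of capacity 2, with strict preferences, which admits a feasible matching
but no feasible matching is stable (every feasible matching has a blocking pair). -/
theorem stmt0 :
    ∃ (loc : Fin 4 → Fin 2) (sRank : Fin 4 → Fin 2 → ℕ) (pRank : Fin 2 → Fin 4 → ℕ),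
      (∀ l : Fin 2, (Finset.univ.filter fun s => loc s = l).card = 2) ∧
      (∀ s, Function.Injective (sRank s)) ∧
      (∀ p, Function.Injective (pRank p)) ∧
      (∃ M, Feasible loc (fun _ : Fin 2 => 2) M) ∧
      (∀ M, Feasible loc (fun _ : Fin 2 => 2) M →
        ∃ s p, BlockingPair sRank pRank M s p) := by
  refine ⟨![0,0,1,1], ![![1,0],![0,1],![1,0],![0,1]], ![![0,1,2,3],![0,2,1,3]], ?_, ?_, ?_, ⟨![0,0,1,1], ?_, ?_⟩, ?_⟩
  · intro l
    fin_cases l <;> · rw [Finset.card_filter, Fin.sum_univ_four]; norm_num <;> decide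
  · decide
  · decide
  · intro p
    fin_cases p <;> · rw [Finset.card_filter, Fin.sum_univ_four]; norm_num <;> simp [Matrix.cons_val_two, Matrix.cons_val_three]
  · decide
  · rintro M ⟨-, hcol⟩
    have h02 : M 0 ≠ M 2 := fun h => by simpa using hcol 0 2 h
    have h12 : M 1 ≠ M 2 := fun h => by simpa using hcol 1 2 h
    have h03 : M 0 ≠ M 3 := fun h => by simpa using hcol 0 3 h
    have key : ∀ a b c : Fin 2, a ≠ c → b ≠ c → a = b := by decide
    have h01 : M 0 = M 1 := key _ _ _ h02 h12
    have h23 : M 2 = M 3 := key _ _ _ (Ne.symm h02) (Ne.symm h03)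
    have htwo : ∀ a : Fin 2, a = 0 ∨ a = 1 := by decide
    rcases htwo (M 0) with h0 | h0
    · have h2 : M 2 = 1 := (htwo (M 2)).resolve_left fun h => h02 (h0.trans h.symm)
      refine ⟨0, 1, ?_, 3, h23 ▸ h2, ?_⟩
      · rw [h0]; decide
      · decide
    · have h2 : M 2 = 0 := (htwo (M 2)).resolve_right fun h => h02 (h0.trans h.symm)
      refine ⟨2, 1, ?_, 1, h01 ▸ h0, ?_⟩
      · rw [h2]; decide
      · decide
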